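/- Let f : (0,∞) → ℝ be nonnegative and non-increasing, and y : (0,∞) → ℝ nonnegative C¹ satisfying y'(t) ≤ f(t) − β·y(t)^a for t > 0 with a > 1, β > 0. Then for every t₀ > 0 and every t > t₀, y(t) ≤ (f(t₀)/β)^(1/a) + (1/(β(a−1)(t−t₀)))^(1/(a−1)). -/

import Mathlib

open Set

/-- Superadditivity of rpow for exponent ≥ 1 on nonnegative reals. -/
lemma rpow_superadd {u v p : ℝ} (hu : 0 ≤ u) (hv : 0 ≤ v) (hp : 1 ≤ p) :
    u ^ p + v ^ p ≤ (u + v) ^ p := by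
  have h := NNReal.add_rpow_le_rpow_add u.toNNReal v.toNNReal hp
  have h2 := NNReal.coe_le_coe.2 h
  rw [NNReal.coe_add, NNReal.coe_rpow, NNReal.coe_rpow, NNReal.coe_rpow, ← Real.toNNReal_add hu hv,
    Real.coe_toNNReal _ hu, Real.coe_toNNReal _ hv, Real.coe_toNNReal _ (by linarith)] at h2
  exact h2

theorem stmt_3 (f y : ℝ → ℝ) (β a : ℝ)
    (hβ : 0 < β) (ha : 1 < a)
    (hf_nonneg : ∀ t, 0 < t → 0 ≤ f t)
    (hf_mono : AntitoneOn f (Set.Ioi (0 : ℝ)))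
    (hy_nonneg : ∀ t, 0 < t → 0 ≤ y t)
    (hy_C1 : ContDiff ℝ 1 y)
    (hineq : ∀ t, 0 < t → deriv y t ≤ f t - β * y t ^ a) :
    ∀ t₀, 0 < t₀ → ∀ t, t₀ < t →
      y t ≤ (f t₀ / β) ^ (1 / a) + (1 / (β * (a - 1) * (t - t₀))) ^ (1 / (a - 1)) := by
  intro t₀ ht₀ t ht
  have ha1 : (0:ℝ) < a - 1 := by linarith
  have hane : a - 1 ≠ 0 := ne_of_gt ha1
  have hapos : (0:ℝ) < a := by linarith
  set e : ℝ := -(1/(a-1)) with he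
  have hele : e ≤ 0 := by
    rw [he]; simp only [neg_nonpos]; positivity
  set X : ℝ := β * (a-1) with hX
  have hXpos : 0 < X := mul_pos hβ ha1
  set c : ℝ := X ^ e with hc
  have hcpos : 0 < c := Real.rpow_pos_of_pos hXpos e
  set Bv : ℝ := (f t₀ / β) ^ (1/a) with hBv
  have hfβnn : 0 ≤ f t₀ / β := div_nonneg (hf_nonneg t₀ ht₀) hβ.le
  have hBvnn : 0 ≤ Bv := Real.rpow_nonneg hfβnn _
  have hBva : β * Bv ^ a = f t₀ := by
    have hb : Bv ^ a = f t₀ / β := by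
      rw [hBv, ← Real.rpow_mul hfβnn, one_div, inv_mul_cancel₀ hapos.ne', Real.rpow_one]
    rw [hb]; field_simp
  have hea : e - 1 = e * a := by rw [he]; field_simp; ring
  have hkey : c * e = -(β * c ^ a) := by
    have hca : c ^ a = X ^ (e * a) := by rw [hc, ← Real.rpow_mul hXpos.le]
    have hXe : X ^ e = X ^ (e * a) * X := by
      rw [← Real.rpow_add_one hXpos.ne' (e * a)]
      congr 1
      linarith
    have hXe' : X * e = -β := by rw [hX, he]; field_simp
    calc c * e = X ^ (e * a) * (X * e) := by rw [hc, hXe]; ring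
      _ = -(β * c ^ a) := by rw [hXe', hca]; ring
  set ψ : ℝ → ℝ := fun x => c * (x - t₀) ^ e with hψ
  have hψ_deriv : ∀ x, t₀ < x → HasDerivAt ψ (-(β * ψ x ^ a)) x := by
    intro x hx
    have hxt : 0 < x - t₀ := sub_pos.2 hx
    have h1 : HasDerivAt (fun z : ℝ => (z - t₀) ^ e) (e * (x - t₀) ^ (e - 1) * 1) x := by
      have := (Real.hasDerivAt_rpow_const (x := x - t₀) (p := e)
        (Or.inl hxt.ne')).comp x ((hasDerivAt_id x).sub_const t₀)
      simpa [Function.comp_def] using this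
    have h2 := h1.const_mul c
    refine h2.congr_deriv (Eq.symm ?_)
    rw [mul_one]
    have hca2 : ψ x ^ a = c ^ a * (x - t₀) ^ (e * a) := by
      show (c * (x - t₀) ^ e) ^ a = _
      rw [Real.mul_rpow hcpos.le (Real.rpow_nonneg hxt.le e), ← Real.rpow_mul hxt.le]
    rw [hca2, ← hea]
    linear_combination (-((x - t₀) ^ (e - 1))) * hkey
  -- choose a starting point s close to t₀
  obtain ⟨x₀, hx₀mem, hx₀⟩ :=
    isCompact_Icc.exists_isMaxOn (nonempty_Icc.mpr ht.le) (hy_C1.continuous.continuousOn)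
  set M := max (y x₀) 1 with hMdef
  have hM : (0:ℝ) < M := lt_of_lt_of_le one_pos (le_max_right _ _)
  have hyM : ∀ x ∈ Icc t₀ t, y x ≤ M := fun x hx => (hx₀ hx).trans (le_max_left _ _)
  set d := (c / M) ^ (a - 1) with hd
  have hdpos : 0 < d := Real.rpow_pos_of_pos (div_pos hcpos hM) _
  have hmin : 0 < min d (t - t₀) := lt_min hdpos (sub_pos.2 ht)
  set s := t₀ + min d (t - t₀) / 2 with hs
  have hs1 : t₀ < s := by rw [hs]; linarith
  have hs2 : s < t := by
    have h := min_le_right d (t - t₀); rw [hs]; linarith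
  have hsd : s - t₀ ≤ d := by
    have h := min_le_left d (t - t₀); rw [hs]; linarith
  have hψs : M ≤ ψ s := by
    have hst : 0 < s - t₀ := sub_pos.2 hs1
    have h1 : d ^ e ≤ (s - t₀) ^ e := Real.rpow_le_rpow_of_nonpos hst hsd hele
    have h2 : d ^ e = M / c := by
      rw [hd, ← Real.rpow_mul (div_pos hcpos hM).le,
        show (a-1) * e = -1 by rw [he]; field_simp, Real.rpow_neg_one, inv_div]
    have h3 : c * (M / c) ≤ c * (s - t₀) ^ e := by
      rw [← h2]; exact mul_le_mul_of_nonneg_left h1 hcpos.le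
    calc M = c * (M / c) := by field_simp
      _ ≤ ψ s := h3
  have hyd : ∀ x : ℝ, HasDerivAt y (deriv y x) x :=
    fun x => (hy_C1.differentiable one_ne_zero x).hasDerivAt
  -- comparison with the perturbed supersolution
  have main : ∀ ε > 0, y t ≤ Bv + ψ t + ε * (t - s) := by
    intro ε hε
    have hBd : ∀ x, t₀ < x →
        HasDerivAt (fun x => Bv + ψ x + ε * (x - s)) (-(β * ψ x ^ a) + ε) x := by
      intro x hx
      have h := ((hψ_deriv x hx).const_add Bv).add
        (((hasDerivAt_id x).sub_const s).const_mul ε)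
      simpa [Pi.add_def] using h
    have hcomp := image_le_of_deriv_right_lt_deriv_boundary' (f := y) (f' := deriv y)
      (a := s) (b := t) (B := fun x => Bv + ψ x + ε * (x - s))
      (B' := fun x => -(β * ψ x ^ a) + ε)
      (hy_C1.continuous.continuousOn)
      (fun x _ => (hyd x).hasDerivWithinAt)
      (by
        have : y s ≤ M := hyM s ⟨hs1.le, hs2.le⟩
        show y s ≤ Bv + ψ s + ε * (s - s)
        simp only [sub_self, mul_zero, add_zero]
        linarith)
      (fun x hx => (hBd x (lt_of_lt_of_le hs1 hx.1)).continuousAt.continuousWithinAt)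
      (fun x hx => (hBd x (lt_of_lt_of_le hs1 hx.1)).hasDerivWithinAt)
      (by
        intro x hx heq
        have hxt₀ : t₀ < x := lt_of_lt_of_le hs1 hx.1
        have hx0 : 0 < x := ht₀.trans hxt₀
        have hψx : 0 ≤ ψ x := mul_nonneg hcpos.le (Real.rpow_nonneg (sub_pos.2 hxt₀).le _)
        have hεx : 0 ≤ ε * (x - s) := mul_nonneg hε.le (sub_nonneg.2 hx.1)
        have heq' : y x = Bv + ψ x + ε * (x - s) := heq
        have hyx : Bv + ψ x ≤ y x := by rw [heq']; linarith
        have h1 : f x ≤ f t₀ := hf_mono (mem_Ioi.2 ht₀) (mem_Ioi.2 hx0) hxt₀.le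
        have h2 : (Bv + ψ x) ^ a ≤ y x ^ a :=
          Real.rpow_le_rpow (by positivity) hyx hapos.le
        have h3 : Bv ^ a + ψ x ^ a ≤ (Bv + ψ x) ^ a := rpow_superadd hBvnn hψx ha.le
        have h4 := hineq x hx0
        have h5 : β * (Bv ^ a + ψ x ^ a) ≤ β * y x ^ a :=
          mul_le_mul_of_nonneg_left (h3.trans h2) hβ.le
        rw [mul_add] at h5
        show deriv y x < -(β * ψ x ^ a) + ε
        have h6 : deriv y x ≤ -(β * ψ x ^ a) := by
          calc deriv y x ≤ f x - β * y x ^ a := h4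
            _ ≤ f t₀ - (β * Bv ^ a + β * ψ x ^ a) := by linarith
            _ = -(β * ψ x ^ a) := by rw [hBva]; ring
        linarith)
    have := hcomp (right_mem_Icc.2 hs2.le)
    simpa using this
  have hfin : y t ≤ Bv + ψ t := by
    refine le_of_forall_pos_le_add fun δ hδ => ?_
    have hts : 0 < t - s := sub_pos.2 hs2
    have h := main (δ / (t - s)) (div_pos hδ hts)
    rwa [div_mul_cancel₀ _ hts.ne'] at h
  have hZ : (0:ℝ) ≤ X * (t - t₀) := mul_nonneg hXpos.le (sub_pos.2 ht).le
  have hrhs : (1 / (X * (t - t₀))) ^ (1/(a-1)) = ψ t := by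
    rw [one_div, Real.inv_rpow hZ, ← Real.rpow_neg hZ, ← he,
      Real.mul_rpow hXpos.le (sub_pos.2 ht).le, ← hc]
  rw [hrhs]
  exact hfin
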